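/- Let F be a finite field with q elements, n a natural number, and let V be a fixed v-dimensional subspace of F^n. Let k, u be natural numbers with k ≤ v, k ≤ u, and u ≤ n. Then the number of subspaces U ∈ Gr(n,u) with dim(U ∩ V) ≥ k is at most 4·q^{−k(n+k−v−u)}·|Gr(n,u)|, where q^{−k(n+k−v−u)} is an integer power of q (the exponent −k(n+k−v−u) may be negative or positive) and the inequality is between real numbers. -/

import Mathlib

open Matrix Finset

namespace RTC

variable {F : Type*} [Field F] [Fintype F]

/-- All columns of the matrix `a` lie in the code `C`. -/
def colsIn {n1 n2 : ℕ} (C : Submodule F (Fin n1 → F)) (a : Matrix (Fin n1) (Fin n2) F) : Prop :=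
  ∀ j : Fin n2, (fun i => a i j) ∈ C

/-- All rows of the matrix `a` lie in the code `C`. -/
def rowsIn {n1 n2 : ℕ} (C : Submodule F (Fin n2 → F)) (a : Matrix (Fin n1) (Fin n2) F) : Prop :=
  ∀ i : Fin n1, (fun j => a i j) ∈ C

/-- Hamming weight of a matrix: the number of nonzero entries. -/
noncomputable def mwt {n1 n2 : ℕ} (x : Matrix (Fin n1) (Fin n2) F) : ℕ :=
  Nat.card {p : Fin n1 × Fin n2 // x p.1 p.2 ≠ 0}

/-- The number of nonzero columns of a matrix (`|x|_1`). -/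
noncomputable def colWt {n1 n2 : ℕ} (x : Matrix (Fin n1) (Fin n2) F) : ℕ :=
  Nat.card {j : Fin n2 // (fun i => x i j) ≠ 0}

/-- The number of nonzero rows of a matrix (`|x|_2`). -/
noncomputable def rowWt {n1 n2 : ℕ} (x : Matrix (Fin n1) (Fin n2) F) : ℕ :=
  Nat.card {i : Fin n1 // (fun j => x i j) ≠ 0}

/-- Hamming weight of a vector. -/
noncomputable def vwt {n : ℕ} (v : Fin n → F) : ℕ := Nat.card {i : Fin n // v i ≠ 0}

/-- Membership in `C1 ⊞ C2`: `c = a1 + a2` with all columns of `a1` in `C1`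
and all rows of `a2` in `C2`. -/
def memBoxPlus {n1 n2 : ℕ} (C1 : Submodule F (Fin n1 → F)) (C2 : Submodule F (Fin n2 → F))
    (c : Matrix (Fin n1) (Fin n2) F) : Prop :=
  ∃ a1 a2 : Matrix (Fin n1) (Fin n2) F, colsIn C1 a1 ∧ rowsIn C2 a2 ∧ c = a1 + a2

/-- The pair `(C1, C2)` is `ρ`-product-expanding: every `c ∈ C1 ⊞ C2` can be written as
`c = a1 + a2` (columns of `a1` in `C1`, rows of `a2` in `C2`) with
`ρ·(n1·|a1|_1 + n2·|a2|_2) ≤ |c|`. -/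
def ProductExpanding {n1 n2 : ℕ} (ρ : ℝ) (C1 : Submodule F (Fin n1 → F))
    (C2 : Submodule F (Fin n2 → F)) : Prop :=
  ∀ c : Matrix (Fin n1) (Fin n2) F, memBoxPlus C1 C2 c →
    ∃ a1 a2 : Matrix (Fin n1) (Fin n2) F, colsIn C1 a1 ∧ rowsIn C2 a2 ∧ c = a1 + a2 ∧
      ρ * ((n1 : ℝ) * (colWt a1 : ℝ) + (n2 : ℝ) * (rowWt a2 : ℝ)) ≤ (mwt c : ℝ)

/-- `C1 ⊗ F^{n2}` viewed as a submodule of matrices: all columns lie in `C`. -/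
def colSp {n1 : ℕ} (n2 : ℕ) (C : Submodule F (Fin n1 → F)) :
    Submodule F (Matrix (Fin n1) (Fin n2) F) where
  carrier := {a | ∀ j : Fin n2, (fun i => a i j) ∈ C}
  add_mem' := by
    intro a b ha hb j
    exact C.add_mem (ha j) (hb j)
  zero_mem' := by
    intro j
    exact C.zero_mem
  smul_mem' := by
    intro r a ha j
    exact C.smul_mem r (ha j)

/-- `F^{n1} ⊗ C` viewed as a submodule of matrices: all rows lie in `C`. -/
def rowSp (n1 : ℕ) {n2 : ℕ} (C : Submodule F (Fin n2 → F)) :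
    Submodule F (Matrix (Fin n1) (Fin n2) F) where
  carrier := {a | ∀ i : Fin n1, (fun j => a i j) ∈ C}
  add_mem' := by
    intro a b ha hb i
    exact C.add_mem (ha i) (hb i)
  zero_mem' := by
    intro i
    exact C.zero_mem
  smul_mem' := by
    intro r a ha i
    exact C.smul_mem r (ha i)

/-- The tensor product code `C1 ⊗ C2`: all columns in `C1` and all rows in `C2`. -/
def tens {n1 n2 : ℕ} (C1 : Submodule F (Fin n1 → F)) (C2 : Submodule F (Fin n2 → F)) :
    Submodule F (Matrix (Fin n1) (Fin n2) F) :=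
  colSp n2 C1 ⊓ rowSp n1 C2

/-- The dual code `C^⊥`. -/
def dualCode {n : ℕ} (C : Submodule F (Fin n → F)) : Submodule F (Fin n → F) where
  carrier := {y | ∀ c ∈ C, ∑ i, y i * c i = 0}
  add_mem' := by
    intro a b ha hb c hc
    have h2 : ∑ i, (a + b) i * c i = (∑ i, a i * c i) + ∑ i, b i * c i := by
      rw [← Finset.sum_add_distrib]; congr 1; funext i
      show (a i + b i) * c i = _; ring
    rw [h2, ha c hc, hb c hc, add_zero]
  zero_mem' := by
    intro c hc
    simp
  smul_mem' := by
    intro r a ha c hc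
    have h2 : ∑ i, (r • a) i * c i = r * ∑ i, a i * c i := by
      rw [Finset.mul_sum]; congr 1; funext i
      show (r * a i) * c i = _; ring
    rw [h2, ha c hc, mul_zero]

/-- Normalized distance `δ(x, S) = min_{s ∈ S} |x − s| / n²` of a matrix to a set of matrices. -/
noncomputable def ndelta {n : ℕ} (x : Matrix (Fin n) (Fin n) F)
    (S : Set (Matrix (Fin n) (Fin n) F)) : ℝ :=
  sInf ((fun s => (mwt (x - s) : ℝ) / ((n : ℝ) ^ 2)) '' S)

/-- The code `C1 ⊗ C2` is `ρ`-robustly testable. -/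
def RobustlyTestable {n : ℕ} (ρ : ℝ) (C1 C2 : Submodule F (Fin n → F)) : Prop :=
  ∀ x : Matrix (Fin n) (Fin n) F,
    ρ * ndelta x (tens C1 C2 : Set (Matrix (Fin n) (Fin n) F)) ≤
      (ndelta x (colSp n C1 : Set (Matrix (Fin n) (Fin n) F)) +
       ndelta x (rowSp n C2 : Set (Matrix (Fin n) (Fin n) F))) / 2

/-- The code `C1 ⊗ C2` is `ρ`-agreement testable. -/
def AgreementTestable {n : ℕ} (ρ : ℝ) (C1 C2 : Submodule F (Fin n → F)) : Prop :=
  ∀ c1 c2 : Matrix (Fin n) (Fin n) F, colsIn C1 c1 → rowsIn C2 c2 →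
    ∃ c : Matrix (Fin n) (Fin n) F, colsIn C1 c ∧ rowsIn C2 c ∧
      ρ * ((colWt (c1 - c) : ℝ) + (rowWt (c2 - c) : ℝ)) ≤ (mwt (c1 - c2) : ℝ) / (n : ℝ)

/-- The `q`-ary entropy function. -/
noncomputable def Hq (q : ℕ) (x : ℝ) : ℝ :=
  x * Real.logb q (q - 1) - x * Real.logb q x - (1 - x) * Real.logb q (1 - x)

/-- A subspace is `α`-sparse if it is spanned by vectors of Hamming weight at most `α·n`. -/
def Sparse {n : ℕ} (α : ℝ) (V : Submodule F (Fin n → F)) : Prop :=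
  ∃ S : Set (Fin n → F), (∀ v ∈ S, (vwt v : ℝ) ≤ α * n) ∧ Submodule.span F S = V

/-- The Gaussian (`q`-ary) binomial coefficient, as a real number. -/
noncomputable def qBinom (q n k : ℕ) : ℝ :=
  ∏ i ∈ Finset.range k, ((q : ℝ) ^ (n - i) - 1) / ((q : ℝ) ^ (k - i) - 1)

/-- Minimal Hamming distance from a vector to a code. -/
noncomputable def vdist {n : ℕ} (v : Fin n → F) (C : Submodule F (Fin n → F)) : ℕ :=
  sInf {d : ℕ | ∃ c ∈ C, vwt (v - c) = d}

/-- A codeword `x ∈ C1 ⊞ C2` is `Δ`-minimal. -/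
def DeltaMinimal {n : ℕ} (C1 C2 : Submodule F (Fin n → F)) (Δ : ℝ)
    (x : Matrix (Fin n) (Fin n) F) : Prop :=
  (∀ i : Fin n, (vwt (fun j => x i j) : ℝ) ≤ (vdist (fun j => x i j) C2 : ℝ) + Δ) ∧
  (∀ j : Fin n, (vwt (fun i => x i j) : ℝ) ≤ (vdist (fun i => x i j) C1 : ℝ) + Δ)

/-- Hamming weight of the submatrix of `x` with rows in `A` and columns in `B`. -/
noncomputable def subWt {n : ℕ} (x : Matrix (Fin n) (Fin n) F) (A B : Finset (Fin n)) : ℕ :=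
  Nat.card {p : Fin n × Fin n // p.1 ∈ A ∧ p.2 ∈ B ∧ x p.1 p.2 ≠ 0}

/-- The pair `(C1, C2)` is `(s, m, β)`-product-expanding. -/
def SMBExpanding {n : ℕ} (s m β : ℝ) (C1 C2 : Submodule F (Fin n → F)) : Prop :=
  ∀ x : Matrix (Fin n) (Fin n) F, memBoxPlus C1 C2 x → x ≠ 0 →
    DeltaMinimal C1 C2 (β * n) x →
    ∀ A B : Finset (Fin n), (n : ℝ) - m ≤ (A.card : ℝ) → (n : ℝ) - m ≤ (B.card : ℝ) →
      s ≤ (subWt x A B : ℝ)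

/-- The function `c` restricted to every line parallel to axis `i` lies in `C i`
(membership in `C^{(i)}`). -/
def axisIn {ι : Type*} [DecidableEq ι] {n : ι → ℕ} (C : ∀ i, Submodule F (Fin (n i) → F))
    (i : ι) (a : (∀ j, Fin (n j)) → F) : Prop :=
  ∀ y : ∀ j, Fin (n j), (fun s => a (Function.update y i s)) ∈ C i

/-- The number of grid points lying on a line parallel to axis `i` on which `a` is not
identically zero.  Since every such line contains exactly `n i` points, this equals
`n i · |a|_i` where `|a|_i` is the number of nonzero lines parallel to axis `i`. -/
noncomputable def lineCnt {ι : Type*} [DecidableEq ι] {n : ι → ℕ} (i : ι)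
    (a : (∀ j, Fin (n j)) → F) : ℕ :=
  Nat.card {y : ∀ j, Fin (n j) // (fun s : Fin (n i) => a (Function.update y i s)) ≠ 0}

/-- Hamming weight of an element of `F^{n_1 × … × n_m}`. -/
noncomputable def gwt {ι : Type*} {n : ι → ℕ} (a : (∀ j, Fin (n j)) → F) : ℕ :=
  Nat.card {y : ∀ j, Fin (n j) // a y ≠ 0}

/-- The collection `C` is `ρ`-product-expanding: every `c ∈ C_1 ⊞ … ⊞ C_m` can be written as
`c = Σ_i a_i` with `a_i ∈ C^{(i)}` and `ρ · Σ_i n_i·|a_i|_i ≤ |c|`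
(note `lineCnt i (a i) = n_i · |a_i|_i`). -/
def MProdExpanding {ι : Type*} [Fintype ι] [DecidableEq ι] {n : ι → ℕ} (ρ : ℝ)
    (C : ∀ i, Submodule F (Fin (n i) → F)) : Prop :=
  ∀ c : (∀ j, Fin (n j)) → F,
    (∃ a : ι → ((∀ j, Fin (n j)) → F), (∀ i, axisIn C i (a i)) ∧ c = ∑ i, a i) →
    ∃ a : ι → ((∀ j, Fin (n j)) → F), (∀ i, axisIn C i (a i)) ∧ c = ∑ i, a i ∧
      ρ * (∑ i, (lineCnt i (a i) : ℝ)) ≤ (gwt c : ℝ)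

end RTC



section Statement4Aux

open Finset Module Submodule

lemma prod_one_sub_pow_ge (x : ℝ) (hx0 : 0 ≤ x) (hx : x ≤ 1/2) (k : ℕ) :
    (1:ℝ)/4 ≤ ∏ j ∈ range k, (1 - x ^ (j+1)) := by
  have hx1 : x ≤ 1 := le_trans hx (by norm_num)
  have hxp : ∀ m : ℕ, x ^ m ≤ (1/2:ℝ) ^ m := fun m => pow_le_pow_left₀ hx0 hx m
  have hterm : ∀ j : ℕ, (0:ℝ) ≤ 1 - x ^ (j+1) := by
    intro j; have := pow_le_one₀ hx0 hx1 (n := j+1); linarith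
  have hprodnn : ∀ m : ℕ, (0:ℝ) ≤ ∏ j ∈ range m, (1 - x ^ (j+1)) :=
    fun m => prod_nonneg (fun j _ => hterm j)
  have key : ∀ k : ℕ, 1 ≤ k → (1:ℝ)/4 + (1/2)^(k+1) ≤ ∏ j ∈ range k, (1 - x ^ (j+1)) := by
    intro k hk
    induction k, hk using Nat.le_induction with
    | base =>
      simp only [range_one, prod_singleton, pow_one]
      have := hxp 1
      norm_num at this ⊢
      linarith
    | succ m hm ih =>
      rw [prod_range_succ]
      have h1 : x ^ (m+1) ≤ (1/2:ℝ)^(m+1) := hxp (m+1)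
      have h2 : (0:ℝ) ≤ 1 - x ^ (m+1) := hterm m
      have h2' : (0:ℝ) ≤ 1 - (1/2:ℝ) ^ (m+1) := by
        have := pow_le_one₀ (by norm_num : (0:ℝ) ≤ 1/2) (by norm_num : (1:ℝ)/2 ≤ 1) (n := m+1)
        linarith
      have h4 : ((1:ℝ)/4 + (1/2)^(m+1)) * (1 - (1/2)^(m+1)) ≤
          (∏ j ∈ range m, (1 - x ^ (j+1))) * (1 - x ^ (m+1)) :=
        mul_le_mul ih (by linarith) h2' (hprodnn m)
      refine le_trans ?_ h4
      have hy : ((1:ℝ)/2)^(m+1) ≤ 1/4 := by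
        calc ((1:ℝ)/2)^(m+1) ≤ (1/2)^2 := pow_le_pow_of_le_one (by norm_num) (by norm_num) (by omega)
        _ = 1/4 := by norm_num
      have hy0 : (0:ℝ) ≤ (1/2:ℝ)^(m+1) := by positivity
      have he : ((1:ℝ)/2)^(m+1+1) = (1/2)^(m+1) * (1/2) := by ring
      rw [he]
      nlinarith
  rcases Nat.eq_zero_or_pos k with rfl | hk
  · norm_num
  · refine le_trans ?_ (key k hk)
    have : (0:ℝ) ≤ (1/2:ℝ)^(k+1) := by positivity
    linarith

variable {F : Type*} [Field F] [Fintype F]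

attribute [local instance] Fintype.ofFinite

/-- fiber equiv -/
noncomputable def fiberEquiv {W : Type*} [AddCommGroup W] [Module F W] [Finite W] (k : ℕ)
    (U : Submodule F W) (hU : finrank F U = k) :
    {s : Fin k → W // LinearIndependent F s ∧ Submodule.span F (Set.range s) = U} ≃
      {t : Fin k → U // LinearIndependent F t} where
  toFun s := ⟨fun i => ⟨s.1 i, by
      have := s.2.2 ▸ Submodule.subset_span (Set.mem_range_self (f := s.1) i); exact this⟩, by
    have h : LinearIndependent F (U.subtype ∘ fun i => (⟨s.1 i, by
        have := s.2.2 ▸ Submodule.subset_span (Set.mem_range_self (f := s.1) i); exact this⟩ : U)) := by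
      convert s.2.1 using 1
      rfl
    exact h.of_comp U.subtype⟩
  invFun t := ⟨fun i => (t.1 i : W), by
    constructor
    · exact t.2.map' U.subtype (Submodule.ker_subtype U)
    · have h1 : Set.range (fun i => ((t.1 i : W))) = U.subtype '' Set.range t.1 := by
        rw [← Set.range_comp]; rfl
      rw [h1, ← Submodule.map_span]
      have h2 : Submodule.span F (Set.range t.1) = ⊤ := by
        apply t.2.span_eq_top_of_card_eq_finrank'
        simp [hU]
      rw [h2, Submodule.map_top, Submodule.range_subtype]⟩
  left_inv s := by ext i; rfl
  right_inv t := by ext i; rfl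

lemma card_grass {W : Type*} [AddCommGroup W] [Module F W] [Finite W] {k : ℕ}
    (hk : k ≤ finrank F W) :
    Nat.card {U : Submodule F W // finrank F U = k} *
        ∏ i ∈ range k, (Fintype.card F ^ k - Fintype.card F ^ i)
      = ∏ i ∈ range k, (Fintype.card F ^ (finrank F W) - Fintype.card F ^ i) := by
  classical
  have hfin : Finite (Submodule F W) := Finite.of_injective _ SetLike.coe_injective
  set f : {s : Fin k → W // LinearIndependent F s} → {U : Submodule F W // finrank F U = k} :=
    fun s => ⟨Submodule.span F (Set.range s.1), by
      rw [finrank_span_eq_card s.2]; simp⟩ with hf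
  have e1 := (Equiv.sigmaFiberEquiv f)
  have hcard : Nat.card {s : Fin k → W // LinearIndependent F s}
      = ∑ U : {U : Submodule F W // finrank F U = k}, Nat.card {s // f s = U} := by
    rw [← Nat.card_congr e1, Nat.card_eq_fintype_card, Fintype.card_sigma]
    congr 1; ext U; rw [Nat.card_eq_fintype_card]
  have hfiber : ∀ U : {U : Submodule F W // finrank F U = k},
      Nat.card {s // f s = U} = ∏ i ∈ range k, (Fintype.card F ^ k - Fintype.card F ^ i) := by
    intro U
    have e2 : {s // f s = U} ≃
        {s : Fin k → W // LinearIndependent F s ∧ Submodule.span F (Set.range s) = U.1} := by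
      refine ⟨fun s => ⟨s.1.1, s.1.2, by have := congrArg Subtype.val s.2; exact this⟩,
        fun s => ⟨⟨s.1, s.2.1⟩, Subtype.ext s.2.2⟩, fun s => rfl, fun s => rfl⟩
    rw [Nat.card_congr e2, Nat.card_congr (fiberEquiv k U.1 U.2)]
    have := card_linearIndependent (K := F) (V := U.1) (k := k) (by rw [U.2])
    rw [U.2] at this
    rw [this, ← Fin.prod_univ_eq_prod_range]
  have h2 := card_linearIndependent (K := F) (V := W) (k := k) hk
  rw [hcard, Finset.sum_congr rfl (fun U _ => hfiber U), Finset.sum_const, Finset.card_univ,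
    smul_eq_mul, ← Nat.card_eq_fintype_card] at h2
  exact h2.trans (Fin.prod_univ_eq_prod_range (fun i => Fintype.card F ^ finrank F W - Fintype.card F ^ i) k)

variable {F : Type*} [Field F] [Fintype F]

lemma finrank_comap_mkQ {M : Type*} [AddCommGroup M] [Module F M] [FiniteDimensional F M]
    (W : Submodule F M) (U' : Submodule F (M ⧸ W)) :
    finrank F (Submodule.comap W.mkQ U') = finrank F U' + finrank F W := by
  set X := Submodule.comap W.mkQ U'
  have hWX : W ≤ X := fun x hx => by
    simp only [X, Submodule.mem_comap, Submodule.mkQ_apply]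
    rw [(Submodule.Quotient.mk_eq_zero W).2 hx]
    exact U'.zero_mem
  set g : X →ₗ[F] M ⧸ W := W.mkQ.comp X.subtype
  have h1 : LinearMap.range g = U' := by
    rw [LinearMap.range_comp, Submodule.range_subtype]
    rw [Submodule.map_comap_eq, Submodule.range_mkQ, top_inf_eq]
  have h2 : LinearMap.ker g = Submodule.comap X.subtype W := by
    rw [LinearMap.ker_comp, Submodule.ker_mkQ]
  have h3 := g.finrank_range_add_finrank_ker
  rw [h1, h2] at h3
  rw [← h3]
  congr 1
  exact (Submodule.comapSubtypeEquivOfLe hWX).finrank_eq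

/-- subspaces of dim u containing W correspond to subspaces of the quotient of dim u - k -/
noncomputable def overEquiv {M : Type*} [AddCommGroup M] [Module F M] [FiniteDimensional F M]
    (W : Submodule F M) {k u : ℕ} (hW : finrank F W = k) (hku : k ≤ u) :
    {U' : Submodule F (M ⧸ W) // finrank F U' = u - k} ≃
      {U : Submodule F M // finrank F U = u ∧ W ≤ U} where
  toFun U' := ⟨Submodule.comap W.mkQ U'.1, by
      rw [finrank_comap_mkQ, U'.2, hW]; omega,
    fun x hx => by
      simp only [Submodule.mem_comap, Submodule.mkQ_apply]
      rw [(Submodule.Quotient.mk_eq_zero W).2 hx]; exact U'.1.zero_mem⟩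
  invFun U := ⟨Submodule.map W.mkQ U.1, by
      have h := finrank_comap_mkQ W (Submodule.map W.mkQ U.1)
      rw [Submodule.comap_map_eq, Submodule.ker_mkQ, sup_eq_left.2 U.2.2, U.2.1, hW] at h
      omega⟩
  left_inv U' := by
    ext1
    show Submodule.map W.mkQ (Submodule.comap W.mkQ U'.1) = U'.1
    rw [Submodule.map_comap_eq, Submodule.range_mkQ, top_inf_eq]
  right_inv U := by
    ext1
    show Submodule.comap W.mkQ (Submodule.map W.mkQ U.1) = U.1
    rw [Submodule.comap_map_eq, Submodule.ker_mkQ, sup_eq_left.2 U.2.2]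

lemma exists_submodule_finrank_eq {M : Type*} [AddCommGroup M] [Module F M]
    [FiniteDimensional F M] {k : ℕ} (hk : k ≤ finrank F M) :
    ∃ Y : Submodule F M, finrank F Y = k := by
  classical
  have b := Module.finBasis F M
  have hli : LinearIndependent F (b ∘ Fin.castLE hk) :=
    b.linearIndependent.comp _ (Fin.castLE_injective hk)
  refine ⟨Submodule.span F (Set.range (b ∘ Fin.castLE hk)), ?_⟩
  rw [finrank_span_eq_card hli, Fintype.card_fin]

variable {F : Type*} [Field F] [Fintype F]

attribute [local instance] Fintype.ofFinite

set_option maxHeartbeats 1000000 in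
set_option synthInstance.maxHeartbeats 400000 in
lemma nat_core (n v k u : ℕ) (V : Submodule F (Fin n → F)) (hV : finrank F V = v)
    (hkv : k ≤ v) (hku : k ≤ u) (hun : u ≤ n) :
    Nat.card {U : Submodule F (Fin n → F) //
        finrank F U = u ∧ k ≤ finrank F ↥(U ⊓ V)} *
      ((∏ i ∈ range k, (Fintype.card F ^ k - Fintype.card F ^ i)) *
       (∏ i ∈ range (u-k), (Fintype.card F ^ (u-k) - Fintype.card F ^ i)))
    ≤ (∏ i ∈ range k, (Fintype.card F ^ v - Fintype.card F ^ i)) *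
      (∏ i ∈ range (u-k), (Fintype.card F ^ (n-k) - Fintype.card F ^ i)) := by
  classical
  set M := Fin n → F
  have hfM : finrank F M = n := by
    simp [M, Module.finrank_fintype_fun_eq_card]
  have hfinSub : Finite (Submodule F M) := Finite.of_injective _ SetLike.coe_injective
  set q := Fintype.card F
  set A := ∏ i ∈ range k, (q ^ k - q ^ i) with hA
  set B := ∏ i ∈ range (u-k), (q ^ (u-k) - q ^ i) with hB
  set C := ∏ i ∈ range k, (q ^ v - q ^ i) with hC
  set D := ∏ i ∈ range (u-k), (q ^ (n-k) - q ^ i) with hD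
  set WT := {W : Submodule F M // finrank F W = k ∧ W ≤ V} with hWT
  set PT := {p : Submodule F M × Submodule F M //
    (finrank F p.1 = k ∧ p.1 ≤ V) ∧ finrank F p.2 = u ∧ p.1 ≤ p.2} with hPT
  set BadT := {U : Submodule F M // finrank F U = u ∧ k ≤ finrank F ↥(U ⊓ V)} with hBadT
  -- surjection PT → BadT
  have hsurj : ∃ f : PT → BadT, Function.Surjective f := by
    refine ⟨fun p => ⟨p.1.2, p.2.2.1, ?_⟩, ?_⟩
    · have h1 : p.1.1 ≤ p.1.2 ⊓ V := le_inf p.2.2.2 p.2.1.2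
      calc k = finrank F p.1.1 := p.2.1.1.symm
      _ ≤ finrank F ↥(p.1.2 ⊓ V) := Submodule.finrank_mono h1
    · rintro ⟨U, hUu, hUk⟩
      obtain ⟨Y, hY⟩ := exists_submodule_finrank_eq (M := ↥(U ⊓ V)) (k := k) (by
        simpa using hUk)
      set W := Submodule.map (U ⊓ V).subtype Y with hW
      have hfW : finrank F W = k := by
        rw [hW, Submodule.finrank_map_subtype_eq]; exact hY
      have hWle : W ≤ U ⊓ V := by
        rw [hW]; exact Submodule.map_subtype_le _ _
      exact ⟨⟨(W, U), ⟨hfW, hWle.trans inf_le_right⟩, hUu, hWle.trans inf_le_left⟩,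
        Subtype.ext rfl⟩
  obtain ⟨f, hf⟩ := hsurj
  have hle : Nat.card BadT ≤ Nat.card PT := Nat.card_le_card_of_surjective f hf
  -- PT as sigma
  have ePT : PT ≃ Σ W : WT, {U : Submodule F M // finrank F U = u ∧ W.1 ≤ U} :=
    ⟨fun p => ⟨⟨p.1.1, p.2.1⟩, ⟨p.1.2, p.2.2⟩⟩,
     fun x => ⟨(x.1.1, x.2.1), ⟨x.1.2, x.2.2⟩⟩,
     fun p => rfl, fun x => rfl⟩
  have hPTcard : Nat.card PT = ∑ W : WT, Nat.card {U : Submodule F M // finrank F U = u ∧ W.1 ≤ U} := by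
    rw [Nat.card_congr ePT, Nat.card_eq_fintype_card, Fintype.card_sigma]
    congr 1; ext W; rw [Nat.card_eq_fintype_card]
  -- per-W count
  have hperW : ∀ W : WT,
      Nat.card {U : Submodule F M // finrank F U = u ∧ W.1 ≤ U} * B = D := by
    intro W
    rw [← Nat.card_congr (overEquiv W.1 W.2.1 hku)]
    have hq : finrank F (M ⧸ W.1) = n - k := by
      have := Submodule.finrank_quotient_add_finrank W.1
      rw [hfM, W.2.1] at this
      omega
    have := card_grass (W := M ⧸ W.1) (k := u - k) (by rw [hq]; omega)
    rw [hq] at this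
    rw [hB, hD]
    exact this
  -- WT count
  have eWT : WT ≃ {W' : Submodule F V // finrank F W' = k} := by
    refine ⟨fun W => ⟨Submodule.comap V.subtype W.1,
        by rw [(Submodule.comapSubtypeEquivOfLe W.2.2).finrank_eq]; exact W.2.1⟩,
      fun W' => ⟨Submodule.map V.subtype W'.1,
        ⟨by rw [Submodule.finrank_map_subtype_eq]; exact W'.2, Submodule.map_subtype_le _ _⟩⟩,
      fun W => ?_, fun W' => ?_⟩
    · ext1
      show Submodule.map V.subtype (Submodule.comap V.subtype W.1) = W.1
      rw [Submodule.map_comap_subtype, inf_eq_right.2 W.2.2]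
    · ext1
      show Submodule.comap V.subtype (Submodule.map V.subtype W'.1) = W'.1
      rw [Submodule.comap_map_eq, Submodule.ker_subtype, sup_bot_eq]
  have hWTcard : Nat.card WT * A = C := by
    rw [Nat.card_congr eWT]
    have := card_grass (W := ↥V) (k := k) (by rw [hV]; exact hkv)
    rw [hV] at this
    exact this
  -- combine
  have hPT2 : Nat.card PT * (A * B) = C * D := by
    rw [hPTcard, Finset.sum_mul, Finset.sum_congr rfl (fun W _ => by
      rw [show Nat.card {U : Submodule F M // finrank F U = u ∧ W.1 ≤ U} * (A * B)
        = (Nat.card {U : Submodule F M // finrank F U = u ∧ W.1 ≤ U} * B) * A by ring,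
        hperW W])]
    rw [Finset.sum_const, Finset.card_univ, smul_eq_mul, ← Nat.card_eq_fintype_card]
    rw [show Nat.card WT * (D * A) = (Nat.card WT * A) * D by ring, hWTcard]
  calc Nat.card BadT * (A * B) ≤ Nat.card PT * (A * B) := Nat.mul_le_mul_right _ hle
  _ = C * D := hPT2

lemma real_core (r : ℝ) (hr : 2 ≤ r) (n v k u : ℕ) (hkv : k ≤ v) (hku : k ≤ u)
    (hun : u ≤ n) (hvn : v ≤ n) :
    (∏ i ∈ range k, (r^v - r^i)) * (∏ i ∈ range (u-k), (r^(n-k) - r^i)) *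
        (∏ i ∈ range u, (r^u - r^i)) * r^(k*(n+k))
      ≤ 4 * r^(k*(v+u)) * ((∏ i ∈ range u, (r^n - r^i)) *
        (∏ i ∈ range k, (r^k - r^i)) * (∏ i ∈ range (u-k), (r^(u-k) - r^i))) := by
  have hr1 : (1:ℝ) < r := by linarith
  have hr0 : (0:ℝ) < r := by linarith
  have hpowle : ∀ {a b : ℕ}, a ≤ b → r^a ≤ r^b := fun h => pow_le_pow_right₀ hr1.le h
  have hnn : ∀ {a b : ℕ}, a ≤ b → (0:ℝ) ≤ r^b - r^a := fun h => by linarith [hpowle h]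
  -- splits
  have hrange : range u = range (k + (u-k)) := by rw [Nat.add_sub_cancel' hku]
  have hsplit : ∀ m : ℕ, k ≤ m → ∏ i ∈ range u, (r^m - r^i) =
      (∏ i ∈ range k, (r^m - r^i)) * ((r^k)^(u-k) * ∏ j ∈ range (u-k), (r^(m-k) - r^j)) := by
    intro m hkm
    rw [hrange, Finset.prod_range_add]
    congr 1
    calc ∏ j ∈ range (u-k), (r^m - r^(k+j))
        = ∏ j ∈ range (u-k), (r^k * (r^(m-k) - r^j)) := by
          refine Finset.prod_congr rfl (fun j _ => ?_)
          have h1 : r^m = r^k * r^(m-k) := by rw [← pow_add, Nat.add_sub_cancel' hkm]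
          have h2 : r^(k+j) = r^k * r^j := by rw [pow_add]
          rw [h1, h2]; ring
      _ = (r^k)^(u-k) * ∏ j ∈ range (u-k), (r^(m-k) - r^j) := by
          rw [Finset.prod_mul_distrib, Finset.prod_const, Finset.card_range]
  have hEs := hsplit u hku
  have hGs := hsplit n (hkv.trans hvn)
  -- entropy product
  set x := r⁻¹ with hx
  have hx0 : 0 ≤ x := by positivity
  have hx2 : x ≤ 1/2 := by
    rw [hx]
    rw [inv_le_comm₀ hr0 (by norm_num)]
    linarith
  set P := ∏ i ∈ range k, (1 - x^(k-i)) with hP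
  have hP4 : (1:ℝ)/4 ≤ P := by
    have := prod_one_sub_pow_ge x hx0 hx2 k
    rw [hP, ← Finset.prod_range_reflect]
    refine le_trans this (le_of_eq (Finset.prod_congr rfl (fun j hj => ?_)))
    rw [Finset.mem_range] at hj
    have he : j + 1 = k - (k - 1 - j) := by omega
    rw [← he]
  have hPterm : ∀ i : ℕ, i < k → (0:ℝ) ≤ 1 - x^(k-i) := by
    intro i hi
    have : x^(k-i) ≤ 1 := pow_le_one₀ hx0 (by linarith)
    linarith
  -- termwise bound
  have hT : ∀ i ∈ range k,
      (r^v - r^i) * (r^u - r^i) * ((1 - x^(k-i)) * r^(n+k)) ≤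
        r^(v+u) * ((r^n - r^i) * (r^k - r^i)) := by
    intro i hi
    rw [Finset.mem_range] at hi
    have key1 : (1 - x^(k-i)) * r^k = r^k - r^i := by
      have h1 : r^k = r^(k-i) * r^i := by rw [← pow_add, Nat.sub_add_cancel hi.le]
      have h2 : x^(k-i) * r^(k-i) = 1 := by
        rw [hx, ← mul_pow, inv_mul_cancel₀ (ne_of_gt hr0), one_pow]
      calc (1 - x^(k-i)) * r^k = r^k - x^(k-i) * (r^(k-i) * r^i) := by rw [← h1]; ring
      _ = r^k - r^i := by rw [← mul_assoc, h2, one_mul]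
    have e1 : (r^v - r^i) * (r^u - r^i) * ((1 - x^(k-i)) * r^(n+k))
        = ((r^v - r^i) * r^n) * ((r^u - r^i) * (r^k - r^i)) := by
      rw [pow_add, show (1 - x^(k-i)) * (r^n * r^k) = ((1 - x^(k-i)) * r^k) * r^n by ring, key1]
      ring
    rw [e1, pow_add]
    have p1 : (r^v - r^i) * r^n ≤ r^v * (r^n - r^i) := by
      have : r^i * r^n = r^(i+n) := by rw [pow_add]
      have h2 : r^v * r^i = r^(v+i) := by rw [pow_add]
      have h3 : r^(v+i) ≤ r^(i+n) := hpowle (by omega)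
      nlinarith
    have p2 : (r^u - r^i) * (r^k - r^i) ≤ r^u * (r^k - r^i) := by
      have h1 : (0:ℝ) ≤ r^k - r^i := hnn (a := i) (b := k) hi.le
      nlinarith [pow_pos hr0 i]
    calc ((r^v - r^i) * r^n) * ((r^u - r^i) * (r^k - r^i))
        ≤ (r^v * (r^n - r^i)) * (r^u * (r^k - r^i)) := by
          apply mul_le_mul p1 p2
          · exact mul_nonneg (hnn (a := i) (b := u) (by omega)) (hnn (a := i) (b := k) hi.le)
          · exact mul_nonneg (pow_nonneg hr0.le v) (hnn (show i ≤ n by omega))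
      _ = r^v * r^u * ((r^n - r^i) * (r^k - r^i)) := by ring
  -- product of termwise bounds
  have hprodT : (∏ i ∈ range k, (r^v - r^i)) * (∏ i ∈ range k, (r^u - r^i)) *
      (P * (r^(n+k))^k) ≤ (r^(v+u))^k *
        ((∏ i ∈ range k, (r^n - r^i)) * (∏ i ∈ range k, (r^k - r^i))) := by
    have := Finset.prod_le_prod (s := range k)
      (f := fun i => (r^v - r^i) * (r^u - r^i) * ((1 - x^(k-i)) * r^(n+k)))
      (g := fun i => r^(v+u) * ((r^n - r^i) * (r^k - r^i)))
      (fun i hi => by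
        rw [Finset.mem_range] at hi
        exact mul_nonneg (mul_nonneg (hnn (by omega)) (hnn (by omega)))
          (mul_nonneg (hPterm i hi) (pow_nonneg hr0.le _)))
      hT
    calc (∏ i ∈ range k, (r^v - r^i)) * (∏ i ∈ range k, (r^u - r^i)) * (P * (r^(n+k))^k)
        = ∏ i ∈ range k, ((r^v - r^i) * (r^u - r^i) * ((1 - x^(k-i)) * r^(n+k))) := by
          rw [hP]
          simp only [Finset.prod_mul_distrib, Finset.prod_const, Finset.card_range]
      _ ≤ ∏ i ∈ range k, (r^(v+u) * ((r^n - r^i) * (r^k - r^i))) := this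
      _ = (r^(v+u))^k * ((∏ i ∈ range k, (r^n - r^i)) * (∏ i ∈ range k, (r^k - r^i))) := by
          simp only [Finset.prod_mul_distrib, Finset.prod_const, Finset.card_range]
  -- use hP4
  set C := ∏ i ∈ range k, (r^v - r^i)
  set E1 := ∏ i ∈ range k, (r^u - r^i)
  set G1 := ∏ i ∈ range k, (r^n - r^i)
  set A := ∏ i ∈ range k, (r^k - r^i)
  set D := ∏ i ∈ range (u-k), (r^(n-k) - r^i)
  set B := ∏ i ∈ range (u-k), (r^(u-k) - r^i)
  have hCnn : 0 ≤ C := Finset.prod_nonneg (fun i hi => hnn (by rw [Finset.mem_range] at hi; omega))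
  have hE1nn : 0 ≤ E1 := Finset.prod_nonneg (fun i hi => hnn (by rw [Finset.mem_range] at hi; omega))
  have hDnn : 0 ≤ D := Finset.prod_nonneg (fun i hi => hnn (by rw [Finset.mem_range] at hi; omega))
  have hBnn : 0 ≤ B := Finset.prod_nonneg (fun i hi => hnn (by rw [Finset.mem_range] at hi; omega))
  have base : C * E1 * (r^(n+k))^k ≤ 4 * ((r^(v+u))^k * (G1 * A)) := by
    have h1 : C * E1 * (r^(n+k))^k ≤ 4 * (C * E1 * (P * (r^(n+k))^k)) := by
      have hpk : (0:ℝ) ≤ (r^(n+k))^k := pow_nonneg (pow_nonneg hr0.le _) _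
      nlinarith [mul_nonneg (mul_nonneg hCnn hE1nn) hpk]
    refine h1.trans ?_
    have := hprodT
    nlinarith
  -- assemble
  have pe1 : (r^(n+k))^k = r^(k*(n+k)) := by rw [← pow_mul, Nat.mul_comm]
  have pe2 : (r^(v+u))^k = r^(k*(v+u)) := by rw [← pow_mul, Nat.mul_comm]
  have pe3 : (r^k)^(u-k) = r^(k*(u-k)) := by rw [← pow_mul]
  rw [pe1, pe2] at base
  rw [pe3] at hEs hGs
  rw [hEs, hGs]
  have hfac : (0:ℝ) ≤ D * (r^(k*(u-k)) * B) :=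
    mul_nonneg hDnn (mul_nonneg (pow_nonneg hr0.le _) hBnn)
  have hmain := mul_le_mul_of_nonneg_right base hfac
  calc C * D * (E1 * (r^(k*(u-k)) * B)) * r^(k*(n+k))
      = (C * E1 * r^(k*(n+k))) * (D * (r^(k*(u-k)) * B)) := by ring
    _ ≤ (4 * (r^(k*(v+u)) * (G1 * A))) * (D * (r^(k*(u-k)) * B)) := hmain
    _ = 4 * r^(k*(v+u)) * (G1 * (r^(k*(u-k)) * D) * A * B) := by ring

end Statement4Aux

open Finset Module Submodule in
/-- the number of `u`-dimensional subspaces `U` with `dim(U ∩ V) ≥ k` is at most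
`4·q^{−k(n+k−v−u)}·|Gr(n,u)|`. -/
theorem statement4 (F : Type) [Field F] [Fintype F] (n v k u : ℕ)
    (V : Submodule F (Fin n → F)) (hV : Module.finrank F V = v)
    (hkv : k ≤ v) (hku : k ≤ u) (hun : u ≤ n) :
    (Nat.card {U : Submodule F (Fin n → F) //
        Module.finrank F U = u ∧ k ≤ Module.finrank F ↥(U ⊓ V)} : ℝ) ≤
      4 * (Fintype.card F : ℝ) ^ (-((k : ℤ) * ((n : ℤ) + (k : ℤ) - (v : ℤ) - (u : ℤ)))) *
        (Nat.card {U : Submodule F (Fin n → F) // Module.finrank F U = u} : ℝ) := by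
  classical
  set q := Fintype.card F with hq
  have hq2 : 2 ≤ q := Fintype.one_lt_card
  set r : ℝ := (q : ℝ) with hrdef
  have hr2 : (2:ℝ) ≤ r := by rw [hrdef]; exact_mod_cast hq2
  have hr1 : (1:ℝ) < r := by linarith
  have hr0 : (0:ℝ) < r := by linarith
  have hfM : finrank F (Fin n → F) = n := by
    simp [Module.finrank_fintype_fun_eq_card]
  have hvn : v ≤ n := by
    have := Submodule.finrank_le V
    rw [hV, hfM] at this; exact this
  -- cast helper
  have castProd : ∀ (a t : ℕ), t ≤ a →
      ((∏ i ∈ range t, (q ^ a - q ^ i) : ℕ) : ℝ) = ∏ i ∈ range t, (r ^ a - r ^ i) := by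
    intro a t hta
    rw [Nat.cast_prod]
    refine Finset.prod_congr rfl (fun i hi => ?_)
    rw [Finset.mem_range] at hi
    have h1 : q ^ i ≤ q ^ a := Nat.pow_le_pow_right (by omega) (by omega)
    rw [Nat.cast_sub h1]
    push_cast
    rfl
  -- real product abbreviations
  set A := ∏ i ∈ range k, (r^k - r^i) with hA
  set B := ∏ i ∈ range (u-k), (r^(u-k) - r^i) with hB
  set C := ∏ i ∈ range k, (r^v - r^i) with hC
  set D := ∏ i ∈ range (u-k), (r^(n-k) - r^i) with hD
  set E := ∏ i ∈ range u, (r^u - r^i) with hE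
  set G := ∏ i ∈ range u, (r^n - r^i) with hG
  have hposfac : ∀ t : ℕ, ∀ i < t, (0:ℝ) < r^t - r^i := by
    intro t i hi
    have := pow_lt_pow_right₀ hr1 hi
    linarith
  have hApos : 0 < A := Finset.prod_pos (fun i hi => hposfac k i (Finset.mem_range.1 hi))
  have hBpos : 0 < B := Finset.prod_pos (fun i hi => hposfac (u-k) i (Finset.mem_range.1 hi))
  have hEpos : 0 < E := Finset.prod_pos (fun i hi => hposfac u i (Finset.mem_range.1 hi))
  set Nbad := Nat.card {U : Submodule F (Fin n → F) //
      Module.finrank F U = u ∧ k ≤ Module.finrank F ↥(U ⊓ V)} with hNbad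
  set Nall := Nat.card {U : Submodule F (Fin n → F) // Module.finrank F U = u} with hNall
  -- cast nat_core
  have hbad : (Nbad : ℝ) * (A * B) ≤ C * D := by
    have h := nat_core n v k u V hV hkv hku hun
    have h2 := (Nat.cast_le (α := ℝ)).2 h
    rw [Nat.cast_mul, Nat.cast_mul, Nat.cast_mul, ← hq,
      castProd k k le_rfl, castProd (u-k) (u-k) le_rfl, castProd v k hkv,
      castProd (n-k) (u-k) (by omega)] at h2
    exact h2
  -- cast all count
  have hall : (Nall : ℝ) * E = G := by
    have h := card_grass (F := F) (W := Fin n → F) (k := u) (by rw [hfM]; exact hun)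
    rw [hfM] at h
    have h2 := congrArg (fun m : ℕ => (m : ℝ)) h
    simp only [Nat.cast_mul] at h2
    rw [← hq, castProd u u le_rfl, castProd n u hun] at h2
    exact h2
  -- main real inequality
  have hmain : (Nbad : ℝ) * r^(k*(n+k)) ≤ 4 * r^(k*(v+u)) * (Nall : ℝ) := by
    have hcore := real_core r hr2 n v k u hkv hku hun hvn
    have step1 : (Nbad : ℝ) * r^(k*(n+k)) * (A * B * E) ≤ C * D * E * r^(k*(n+k)) := by
      have := mul_le_mul_of_nonneg_right hbad (le_of_lt (mul_pos hEpos
        (pow_pos hr0 (k*(n+k)))))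
      calc (Nbad : ℝ) * r^(k*(n+k)) * (A * B * E)
          = (Nbad : ℝ) * (A * B) * (E * r^(k*(n+k))) := by ring
        _ ≤ C * D * (E * r^(k*(n+k))) := this
        _ = C * D * E * r^(k*(n+k)) := by ring
    have step2 : C * D * E * r^(k*(n+k)) ≤ 4 * r^(k*(v+u)) * (Nall : ℝ) * (A * B * E) := by
      calc C * D * E * r^(k*(n+k)) ≤ 4 * r^(k*(v+u)) * (G * A * B) := hcore
        _ = 4 * r^(k*(v+u)) * (((Nall : ℝ) * E) * A * B) := by rw [hall]
        _ = 4 * r^(k*(v+u)) * (Nall : ℝ) * (A * B * E) := by ring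
    have hABE : (0:ℝ) < A * B * E := mul_pos (mul_pos hApos hBpos) hEpos
    have := le_trans step1 step2
    exact le_of_mul_le_mul_right this hABE
  -- convert to zpow
  have hzp : (r : ℝ) ^ (-((k : ℤ) * ((n : ℤ) + (k : ℤ) - (v : ℤ) - (u : ℤ))))
      = r^(k*(v+u)) / r^(k*(n+k)) := by
    rw [show -((k : ℤ) * ((n : ℤ) + (k : ℤ) - (v : ℤ) - (u : ℤ)))
        = ((k*(v+u) : ℕ) : ℤ) - ((k*(n+k) : ℕ) : ℤ) by push_cast; ring]
    rw [zpow_sub₀ (ne_of_gt hr0), zpow_natCast, zpow_natCast]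
  rw [hzp]
  rw [show 4 * (r^(k*(v+u)) / r^(k*(n+k))) * (Nall : ℝ)
      = (4 * r^(k*(v+u)) * (Nall : ℝ)) / r^(k*(n+k)) by ring]
  rw [le_div_iff₀ (pow_pos hr0 _)]
  exact hmain
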